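/- In the non-progressive threshold model on the star K_{1,n-1} with strict majority thresholds, the minimum size of a timed target set equals 2 (achieved by targeting the center at steps 0 and 1), while no timed target set of size 1 exists. -/

import Mathlib

open Finset
open scoped Classical

variable {V : Type*}

noncomputable def Qseq (G : SimpleGraph V) [Fintype V] (τ : V → ℕ) (S : ℕ → Finset V) :
    ℕ → Finset V
  | 0 => ∅
  | i + 1 => Finset.univ.filter fun v =>
      τ v ≤ (G.neighborFinset v ∩ (S i ∪ Qseq G τ S i)).card

def IsTTS (G : SimpleGraph V) [Fintype V] (τ : V → ℕ) (S : ℕ → Finset V) (k : ℕ) : Prop :=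
  S k = ∅ ∧ Qseq G τ S k = Finset.univ

def ttsSize (S : ℕ → Finset V) (k : ℕ) : ℕ := ∑ i ∈ Finset.range (k + 1), (S i).card

noncomputable def strictMaj (G : SimpleGraph V) [Fintype V] (v : V) : ℕ := (G.degree v + 2) / 2

noncomputable def npStep (G : SimpleGraph V) [Fintype V] (τ : V → ℕ) (A : Finset V) : Finset V :=
  Finset.univ.filter fun v => τ v ≤ (G.neighborFinset v ∩ A).card

def IsTS (G : SimpleGraph V) [Fintype V] (τ : V → ℕ) (S : Finset V) : Prop :=
  ∃ i : ℕ, (npStep G τ)^[i] S = Finset.univ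

noncomputable def MTT (G : SimpleGraph V) [Fintype V] (τ : V → ℕ) : ℕ :=
  sInf {m | ∃ (S : ℕ → Finset V) (k : ℕ), IsTTS G τ S k ∧ ttsSize S k = m}

/-- The star graph `K_{1,n-1}` on `Fin n`, with center the vertex with value `0`. -/
def starGraph (n : ℕ) : SimpleGraph (Fin n) where
  Adj v u := v ≠ u ∧ (v.val = 0 ∨ u.val = 0)
  symm := by
    constructor
    intro v u h
    exact ⟨h.1.symm, h.2.symm⟩
  loopless := by
    constructor
    intro v h
    exact h.1 rfl

section StarAux

variable {n : ℕ}

lemma star_val_zero_iff (c : Fin n) (hc : c.val = 0) (u : Fin n) : u.val = 0 ↔ u = c :=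
  ⟨fun h => Fin.ext (h.trans hc.symm), fun h => h ▸ hc⟩

lemma star_nbhd_c (c : Fin n) (hc : c.val = 0) :
    (starGraph n).neighborFinset c = univ \ {c} := by
  ext u
  rw [SimpleGraph.mem_neighborFinset]
  simp only [SimpleGraph.mem_neighborFinset, starGraph, mem_sdiff, mem_univ, true_and,
    mem_singleton, hc]
  constructor
  · rintro ⟨h, _⟩; exact fun h' => h h'.symm
  · intro h; exact ⟨fun h' => h h'.symm, by simp⟩


lemma star_nbhd_leaf (c : Fin n) (hc : c.val = 0) (v : Fin n) (hv : v ≠ c) :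
    (starGraph n).neighborFinset v = {c} := by
  ext u
  rw [SimpleGraph.mem_neighborFinset]
  simp only [SimpleGraph.mem_neighborFinset, starGraph, mem_singleton]
  constructor
  · rintro ⟨hne, h | h⟩
    · exact absurd ((star_val_zero_iff c hc v).1 h) hv
    · exact (star_val_zero_iff c hc u).1 h
  · intro h
    subst h
    exact ⟨hv, Or.inr hc⟩

lemma star_card_leaves (c : Fin n) : (univ \ {c} : Finset (Fin n)).card = n - 1 := by
  rw [Finset.card_sdiff_of_subset (by simp)]
  simp

lemma star_tau_c (c : Fin n) (hc : c.val = 0) :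
    strictMaj (starGraph n) c = (n + 1) / 2 := by
  have hn1 : 1 ≤ n := Nat.one_le_iff_ne_zero.2 (by rintro rfl; exact absurd c.2 (by omega))
  rw [strictMaj, SimpleGraph.degree, star_nbhd_c c hc, star_card_leaves]
  omega

lemma star_tau_leaf (c : Fin n) (hc : c.val = 0) (v : Fin n) (hv : v ≠ c) :
    strictMaj (starGraph n) v = 1 := by
  rw [strictMaj, SimpleGraph.degree, star_nbhd_leaf c hc v hv]
  simp

lemma mem_npStep_leaf (c : Fin n) (hc : c.val = 0) (v : Fin n) (hv : v ≠ c)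
    (A : Finset (Fin n)) :
    v ∈ npStep (starGraph n) (strictMaj (starGraph n)) A ↔ c ∈ A := by
  rw [npStep, mem_filter, star_nbhd_leaf c hc v hv, star_tau_leaf c hc v hv]
  by_cases h : c ∈ A
  · simp [Finset.singleton_inter_of_mem h, h]
  · simp [Finset.singleton_inter_of_notMem h, h]

lemma mem_npStep_c (c : Fin n) (hc : c.val = 0) (A : Finset (Fin n)) :
    c ∈ npStep (starGraph n) (strictMaj (starGraph n)) A ↔
      (n + 1) / 2 ≤ ((univ \ {c}) ∩ A).card := by
  rw [npStep, mem_filter, star_nbhd_c c hc, star_tau_c c hc]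
  simp only [mem_univ, true_and]
  congr! 2
  ext u
  simp

lemma npStep_empty (hn : 3 ≤ n) (c : Fin n) (hc : c.val = 0) :
    npStep (starGraph n) (strictMaj (starGraph n)) (∅ : Finset (Fin n)) = ∅ := by
  ext w
  by_cases hw : w = c
  · subst hw
    rw [mem_npStep_c w hc]
    simp
    omega
  · rw [mem_npStep_leaf c hc w hw]
    simp

lemma npStep_center (hn : 3 ≤ n) (c : Fin n) (hc : c.val = 0) :
    npStep (starGraph n) (strictMaj (starGraph n)) ({c} : Finset (Fin n)) = univ \ {c} := by
  ext w
  by_cases hw : w = c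
  · subst hw
    rw [mem_npStep_c w hc]
    have : ((univ \ {w}) ∩ {w} : Finset (Fin n)) = ∅ := by
      ext u; simp
    rw [this]
    simp
    omega
  · rw [mem_npStep_leaf c hc w hw]
    simp [hw]

lemma npStep_leaf_single (hn : 3 ≤ n) (c : Fin n) (hc : c.val = 0) (v : Fin n) (hv : v ≠ c) :
    npStep (starGraph n) (strictMaj (starGraph n)) ({v} : Finset (Fin n)) = ∅ := by
  ext w
  by_cases hw : w = c
  · subst hw
    rw [mem_npStep_c w hc]
    have hle : ((univ \ {w}) ∩ {v} : Finset (Fin n)).card ≤ 1 := by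
      calc ((univ \ {w}) ∩ {v} : Finset (Fin n)).card ≤ ({v} : Finset (Fin n)).card :=
        Finset.card_le_card (Finset.inter_subset_right)
      _ = 1 := Finset.card_singleton v
    simp only [Finset.notMem_empty, iff_false]
    omega
  · rw [mem_npStep_leaf c hc w hw]
    simp [Ne.symm hv]

lemma npStep_leaves (hn : 3 ≤ n) (c : Fin n) (hc : c.val = 0) :
    npStep (starGraph n) (strictMaj (starGraph n)) (univ \ {c} : Finset (Fin n)) = {c} := by
  ext w
  by_cases hw : w = c
  · subst hw
    rw [mem_npStep_c w hc]
    rw [Finset.inter_self, star_card_leaves]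
    simp
    omega
  · rw [mem_npStep_leaf c hc w hw]
    simp [hw]

lemma npStep_univ (hn : 3 ≤ n) (c : Fin n) (hc : c.val = 0) :
    npStep (starGraph n) (strictMaj (starGraph n)) (univ : Finset (Fin n)) = univ := by
  ext w
  by_cases hw : w = c
  · subst hw
    rw [mem_npStep_c w hc]
    rw [Finset.inter_univ, star_card_leaves]
    simp
    omega
  · rw [mem_npStep_leaf c hc w hw]
    simp

lemma Qseq_succ (G : SimpleGraph (Fin n)) (τ : Fin n → ℕ) (S : ℕ → Finset (Fin n)) (i : ℕ) :
    Qseq G τ S (i + 1) = npStep G τ (S i ∪ Qseq G τ S i) := by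
  ext v
  simp only [Qseq, npStep, mem_filter, mem_univ, true_and]
  congr! 3
  ext u
  simp

lemma star_lower (hn : 3 ≤ n) (c : Fin n) (hc : c.val = 0)
    (S : ℕ → Finset (Fin n)) (k : ℕ)
    (hT : IsTTS (starGraph n) (strictMaj (starGraph n)) S k) : 2 ≤ ttsSize S k := by
  by_contra hlt
  push_neg at hlt
  have hbud : ttsSize S k ≤ 1 := by omega
  set G := starGraph n
  set τ := strictMaj (starGraph n)
  have hsum : ∀ i, i ≤ k → ∑ j ∈ Finset.range (i + 1), (S j).card ≤ 1 := by
    intro i hi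
    calc ∑ j ∈ Finset.range (i + 1), (S j).card
        ≤ ∑ j ∈ Finset.range (k + 1), (S j).card :=
        Finset.sum_le_sum_of_subset (Finset.range_subset_range.2 (by omega))
      _ ≤ 1 := hbud
  have main : ∀ i, i ≤ k →
      (Qseq G τ S i = ∅ ∧ ∑ j ∈ Finset.range i, (S j).card ≤ 1) ∨
      ((Qseq G τ S i = univ \ {c} ∨ Qseq G τ S i = {c}) ∧
        ∑ j ∈ Finset.range i, (S j).card = 1) := by
    intro i
    induction i with
    | zero => intro _; left; exact ⟨rfl, by simp⟩
    | succ i ih =>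
      intro hik
      have hi : i ≤ k := by omega
      have hb1 : ∑ j ∈ Finset.range (i + 1), (S j).card ≤ 1 := hsum i hi
      have hsr : ∑ j ∈ Finset.range (i + 1), (S j).card
          = ∑ j ∈ Finset.range i, (S j).card + (S i).card := Finset.sum_range_succ _ _
      rcases ih hi with ⟨hQ, hs⟩ | ⟨hQ, hs⟩
      · by_cases hSi : S i = ∅
        · left
          constructor
          · rw [Qseq_succ, hQ, hSi]
            simpa using npStep_empty hn c hc
          · omega
        · have hcard : 1 ≤ (S i).card := Finset.card_pos.2 (Finset.nonempty_iff_ne_empty.2 hSi)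
          have hcard1 : (S i).card = 1 := by omega
          obtain ⟨v, hv⟩ := Finset.card_eq_one.1 hcard1
          by_cases hvc : v = c
          · right
            constructor
            · left
              rw [Qseq_succ, hQ, hv, hvc]
              simpa using npStep_center hn c hc
            · omega
          · left
            constructor
            · rw [Qseq_succ, hQ, hv]
              simpa using npStep_leaf_single hn c hc v hvc
            · omega
      · have hSi : S i = ∅ := by
          have : (S i).card = 0 := by omega
          exact Finset.card_eq_zero.1 this
        right
        refine ⟨?_, by omega⟩
        rcases hQ with hQ | hQ
        · right
          rw [Qseq_succ, hQ, hSi]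
          simpa using npStep_leaves hn c hc
        · left
          rw [Qseq_succ, hQ, hSi]
          have : (∅ ∪ {c} : Finset (Fin n)) = {c} := by simp
          rw [this]
          exact npStep_center hn c hc
  have hQk := hT.2
  rcases main k le_rfl with ⟨hQ, _⟩ | ⟨hQ | hQ, _⟩
  · rw [hQ] at hQk
    have : c ∈ (∅ : Finset (Fin n)) := by rw [hQk]; exact mem_univ c
    simp at this
  · rw [hQ] at hQk
    have : c ∈ (univ \ {c} : Finset (Fin n)) := by rw [hQk]; exact mem_univ c
    simp at this
  · rw [hQ] at hQk
    have hv : (⟨1, by omega⟩ : Fin n) ∈ ({c} : Finset (Fin n)) := by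
      rw [hQk]; exact mem_univ _
    rw [Finset.mem_singleton] at hv
    have : (1 : ℕ) = 0 := by rw [← hc, ← hv]
    omega

end StarAux

/-- On the star `K_{1,n-1}` (`n ≥ 3`) with strict majority thresholds, the
sequence targeting the center at steps 0 and 1 (and nothing afterwards) is a timed target
set of size 2, and the minimum size of a timed target set equals 2 (in particular there is
no timed target set of size 1). -/
theorem stmt1 (n : ℕ) (hn : 3 ≤ n) (c : Fin n) (hc : c.val = 0) :
    (IsTTS (starGraph n) (strictMaj (starGraph n))
        (fun i => if i ≤ 1 then {c} else ∅) 2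
      ∧ ttsSize (fun i => if i ≤ 1 then ({c} : Finset (Fin n)) else ∅) 2 = 2)
    ∧ IsLeast {m : ℕ | ∃ (S : ℕ → Finset (Fin n)) (k : ℕ),
        IsTTS (starGraph n) (strictMaj (starGraph n)) S k ∧ ttsSize S k = m} 2 := by
  set G := starGraph n
  set τ := strictMaj (starGraph n)
  set S : ℕ → Finset (Fin n) := fun i => if i ≤ 1 then {c} else ∅ with hS
  have hQ1 : Qseq G τ S 1 = univ \ {c} := by
    rw [Qseq_succ]
    show npStep G τ (S 0 ∪ ∅) = _
    have : S 0 ∪ ∅ = ({c} : Finset (Fin n)) := by simp [hS]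
    rw [this]
    exact npStep_center hn c hc
  have hQ2 : Qseq G τ S 2 = univ := by
    rw [Qseq_succ, hQ1]
    have : S 1 ∪ (univ \ {c}) = (univ : Finset (Fin n)) := by
      ext u; by_cases hu : u = c <;> simp [hS, hu]
    rw [this]
    exact npStep_univ hn c hc
  have hTTS : IsTTS G τ S 2 := ⟨by simp [hS], hQ2⟩
  have hsize : ttsSize S 2 = 2 := by
    simp [ttsSize, Finset.sum_range_succ, hS]
  refine ⟨⟨hTTS, hsize⟩, ⟨S, 2, hTTS, hsize⟩, ?_⟩
  rintro m ⟨S', k, hT, rfl⟩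
  exact star_lower hn c hc S' k hT
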